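/- Let (G=(V,E), u, c, k) be a feasible Cap-k-ECSS instance with capacities u_e ∈ {1,…,k}, optimal value OPT, and u_max = max_{e∈E} u_e. Fix r ∈ V and let D be the directed multigraph obtained from G by replacing every edge xy ∈ E by u_{xy} bidirected pairs of arcs, each arc arising from an edge e having cost c_e. Then D contains an r-rooted k-arborescence, and for any minimum-cost r-rooted k-arborescence T' in D, the edge set F' = { e ∈ E : at least one arc arising from e is in T' } is feasible for the Cap-k-ECSS instance and satisfies c(F') ≤ min(k, 2·u_max)·OPT. -/

import Mathlib

/-!
The full reduction for Cap-k-ECSS: if the instance is feasible with optimal value `OPT`,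
then the digraph `D` obtained by replacing each edge `e` by `u e` bidirected pairs of
arcs contains an `r`-rooted `k`-arborescence, and for any minimum-cost such
arborescence `T'`, the induced edge set `F'` is feasible for the Cap-k-ECSS instance
with `c(F') ≤ min(k, 2·u_max)·OPT`.

Arcs are modeled by triples `(e, i, b) : E × Fin k × Bool` with copy index `i < u e`
and orientation `b`.
-/

/-- The set of edges of `F` having exactly one endpoint in `S`, i.e. `F ∩ δ(S)`. -/
def cutEdges {V E : Type*} [DecidableEq V] (ends : E → V × V) (F : Finset E)
    (S : Finset V) : Finset E :=
  F.filter fun e => ¬(((ends e).1 ∈ S) ↔ ((ends e).2 ∈ S))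

/-- `F` is feasible for the Cap-k-ECSS instance. -/
def CapFeasible {V E : Type*} [Fintype V] [DecidableEq V] (ends : E → V × V)
    (u : E → ℕ) (k : ℕ) (F : Finset E) : Prop :=
  ∀ R : Finset V, R.Nonempty → R ≠ Finset.univ → k ≤ ∑ e ∈ cutEdges ends F R, u e

/-- Acyclicity of the underlying undirected multigraph of an arc set. -/
def UndirAcyclic {W A : Type*} [DecidableEq W] (arcs : A → W × W) (T : Finset A) : Prop :=
  ∀ T' ⊆ T, T'.Nonempty →
    T'.card < ((T'.image fun a => (arcs a).1) ∪ (T'.image fun a => (arcs a).2)).card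

/-- `T` is an `r`-rooted arborescence. -/
def IsArborescence {W A : Type*} [DecidableEq W] (arcs : A → W × W) (r : W)
    (T : Finset A) : Prop :=
  UndirAcyclic arcs T ∧
    ∀ v : W, Relation.ReflTransGen (fun x y => ∃ a ∈ T, arcs a = (x, y)) r v

/-- `T` is an `r`-rooted `k`-arborescence: a union of `k` arc-disjoint `r`-rooted
arborescences. -/
def IsKArborescence {W A : Type*} [DecidableEq W] [DecidableEq A] (arcs : A → W × W)
    (r : W) (k : ℕ) (T : Finset A) : Prop :=
  ∃ P : Fin k → Finset A,
    (∀ i, IsArborescence arcs r (P i)) ∧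
    (∀ i j, i ≠ j → Disjoint (P i) (P j)) ∧
    Finset.univ.biUnion P = T

/-- The arc `(e, i, b)` arising from edge `e`: `b` chooses the orientation. -/
def capArcEnds {V E : Type*} (ends : E → V × V) (k : ℕ) (a : E × Fin k × Bool) :
    V × V :=
  if a.2.2 then ends a.1 else ((ends a.1).2, (ends a.1).1)

set_option linter.unusedSectionVars false



section Pack
variable {W A : Type*} [Fintype W] [DecidableEq W] [DecidableEq A]
variable (arcs : A → W × W)

def fcount (S' : Finset A) (T : Finset W) : ℕ :=
  (S'.filter fun a => (arcs a).1 ∈ T ∧ (arcs a).2 ∉ T).card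

lemma fcount_submodular (S' : Finset A) (T T' : Finset W) :
    fcount arcs S' (T ∪ T') + fcount arcs S' (T ∩ T') ≤
      fcount arcs S' T + fcount arcs S' T' := by
  classical
  simp only [fcount, Finset.card_filter]
  rw [← Finset.sum_add_distrib, ← Finset.sum_add_distrib]
  apply Finset.sum_le_sum
  intro a _
  by_cases h1 : (arcs a).1 ∈ T <;> by_cases h2 : (arcs a).1 ∈ T' <;>
    by_cases h3 : (arcs a).2 ∈ T <;> by_cases h4 : (arcs a).2 ∈ T' <;>
    simp [Finset.mem_union, Finset.mem_inter, h1, h2, h3, h4]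

lemma undirAcyclic_insert (F : Finset A) (a : A) (h : UndirAcyclic arcs F)
    (hne : (arcs a).1 ≠ (arcs a).2)
    (hfresh : ∀ b ∈ F, (arcs b).1 ≠ (arcs a).2 ∧ (arcs b).2 ≠ (arcs a).2) :
    UndirAcyclic arcs (insert a F) := by
  classical
  intro T' hT' hTne
  by_cases ha : a ∈ T'
  · set v := (arcs a).2 with hv
    set T₂ := T'.erase a with hT₂
    have hT₂F : T₂ ⊆ F := by
      intro x hx
      have hx' := hT' (Finset.mem_of_mem_erase hx)
      rcases Finset.mem_insert.mp hx' with h' | h'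
      · exact absurd h' (Finset.ne_of_mem_erase hx)
      · exact h'
    have hvmem : v ∈ (T'.image fun b => (arcs b).1) ∪ (T'.image fun b => (arcs b).2) :=
      Finset.mem_union_right _ (Finset.mem_image_of_mem _ ha)
    have humem : (arcs a).1 ∈ (T'.image fun b => (arcs b).1) ∪ (T'.image fun b => (arcs b).2) :=
      Finset.mem_union_left _ (Finset.mem_image_of_mem _ ha)
    have hvT₂ : v ∉ (T₂.image fun b => (arcs b).1) ∪ (T₂.image fun b => (arcs b).2) := by
      simp only [Finset.mem_union, Finset.mem_image, not_or, not_exists, not_and]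
      exact ⟨fun x hx => (hfresh x (hT₂F hx)).1, fun x hx => (hfresh x (hT₂F hx)).2⟩
    have hsub : (T₂.image fun b => (arcs b).1) ∪ (T₂.image fun b => (arcs b).2) ⊆
        (T'.image fun b => (arcs b).1) ∪ (T'.image fun b => (arcs b).2) :=
      Finset.union_subset_union (Finset.image_subset_image (Finset.erase_subset _ _))
        (Finset.image_subset_image (Finset.erase_subset _ _))
    have hcard : T'.card = T₂.card + 1 := (Finset.card_erase_add_one ha).symm
    by_cases hT₂e : T₂.Nonempty
    · have h1 := h T₂ hT₂F hT₂e
      have h2 : insert v ((T₂.image fun b => (arcs b).1) ∪ (T₂.image fun b => (arcs b).2)) ⊆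
          (T'.image fun b => (arcs b).1) ∪ (T'.image fun b => (arcs b).2) := by
        exact Finset.insert_subset hvmem hsub
      have h3 := Finset.card_le_card h2
      rw [Finset.card_insert_of_notMem hvT₂] at h3
      omega
    · have hT₂E : T₂ = ∅ := Finset.not_nonempty_iff_eq_empty.mp hT₂e
      have hzero : T₂.card = 0 := by rw [hT₂E]; simp
      have hone : T'.card = 1 := by omega
      have h2 : ({(arcs a).1, v} : Finset W) ⊆
          (T'.image fun b => (arcs b).1) ∪ (T'.image fun b => (arcs b).2) := by
        intro x hx
        rcases Finset.mem_insert.mp hx with rfl | hx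
        · exact humem
        · rw [Finset.mem_singleton.mp hx]; exact hvmem
      have h3 := Finset.card_le_card h2
      rw [Finset.card_pair hne] at h3
      omega
  · refine h T' ?_ hTne
    intro x hx
    rcases Finset.mem_insert.mp (hT' hx) with rfl | h'
    · exact absurd hx ha
    · exact h'

lemma cross_of_reach {W A : Type*} [DecidableEq W] (arcs : A → W × W) (P : Finset A)
    {T : Finset W} {r w : W}
    (h : Relation.ReflTransGen (fun x y => ∃ a ∈ P, arcs a = (x, y)) r w)
    (hr : r ∈ T) (hw : w ∉ T) : ∃ a ∈ P, (arcs a).1 ∈ T ∧ (arcs a).2 ∉ T := by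
  induction h with
  | refl => exact absurd hr hw
  | @tail b c hrb hbc ih =>
    by_cases hb : b ∈ T
    · obtain ⟨a, haP, ha⟩ := hbc
      exact ⟨a, haP, by rw [ha]; exact ⟨hb, hw⟩⟩
    · exact ih hb

lemma card_filter_fin_lt {k m : ℕ} (h : m ≤ k) :
    (Finset.univ.filter fun i : Fin k => (i : ℕ) < m).card = m := by
  have : (Finset.univ.filter fun i : Fin k => (i : ℕ) < m) =
      (Finset.univ : Finset (Fin m)).image (Fin.castLE h) := by
    ext i
    simp only [Finset.mem_filter, Finset.mem_univ, true_and, Finset.mem_image]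
    constructor
    · intro hi; exact ⟨⟨(i : ℕ), hi⟩, by ext; simp⟩
    · rintro ⟨j, rfl⟩; exact j.2
  rw [this, Finset.card_image_of_injective _ (Fin.castLE_injective h), Finset.card_fin]

end Pack

section Pack2
variable {W A : Type*} [Fintype W] [DecidableEq W] [DecidableEq A]
variable (arcs : A → W × W)

set_option linter.unusedSectionVars false

lemma exists_good_arc (r : W) (k : ℕ)
    (S : Finset A) (hS : ∀ T, r ∈ T → T ≠ Finset.univ → k + 1 ≤ fcount arcs S T)
    (U : Finset W) (F : Finset A) (hrU : r ∈ U) (hUne : U ≠ Finset.univ)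
    (hFU : ∀ a ∈ F, (arcs a).1 ∈ U ∧ (arcs a).2 ∈ U)
    (hINV : ∀ T, r ∈ T → T ≠ Finset.univ → k ≤ fcount arcs (S \ F) T) :
    ∃ a ∈ S \ F, (arcs a).1 ∈ U ∧ (arcs a).2 ∉ U ∧
      ∀ T, r ∈ T → (arcs a).1 ∈ T → (arcs a).2 ∉ T →
        k + 1 ≤ fcount arcs (S \ F) T := by
  classical
  -- arcs of F never leave a set containing U
  have hFkeep : ∀ T : Finset W, U ⊆ T → fcount arcs S T ≤ fcount arcs (S \ F) T := by
    intro T hUT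
    apply Finset.card_le_card
    intro x hx
    simp only [Finset.mem_filter, Finset.mem_sdiff] at hx ⊢
    refine ⟨⟨hx.1, fun hxF => hx.2.2 (hUT (hFU x hxF).2)⟩, hx.2⟩
  set C : Finset (Finset W) := Finset.univ.filter
    (fun T => r ∈ T ∧ T ∪ U ≠ Finset.univ ∧ fcount arcs (S \ F) T ≤ k) with hC
  have hCne_univ : ∀ T ∈ C, T ≠ Finset.univ := by
    intro T hT
    simp only [hC, Finset.mem_filter] at hT
    intro h; apply hT.2.2.1; rw [h]; simp
  by_cases hcrit : C.Nonempty
  · obtain ⟨Tm, hTmC, hTmax⟩ := C.exists_maximal hcrit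
    simp only [hC, Finset.mem_filter] at hTmC
    obtain ⟨-, hrTm, hTmU, hTmk⟩ := hTmC
    set T₀ := Tm ∪ U with hT₀
    have hrT₀ : r ∈ T₀ := Finset.mem_union_left _ hrTm
    have hT₀univ : T₀ ≠ Finset.univ := hTmU
    have h1 : k + 1 ≤ fcount arcs (S \ F) T₀ :=
      le_trans (hS T₀ hrT₀ hT₀univ) (hFkeep T₀ Finset.subset_union_right)
    -- there is an arc leaving T₀ whose tail is not in Tm
    have h2 : ∃ a ∈ S \ F, ((arcs a).1 ∈ T₀ ∧ (arcs a).2 ∉ T₀) ∧ (arcs a).1 ∉ Tm := by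
      by_contra hno
      push_neg at hno
      have hsub : ((S \ F).filter fun a => (arcs a).1 ∈ T₀ ∧ (arcs a).2 ∉ T₀) ⊆
          ((S \ F).filter fun a => (arcs a).1 ∈ Tm ∧ (arcs a).2 ∉ Tm) := by
        intro x hx
        simp only [Finset.mem_filter] at hx ⊢
        refine ⟨hx.1, hno x hx.1 hx.2, fun h2 => hx.2.2 (Finset.mem_union_left _ h2)⟩
      have := Finset.card_le_card hsub
      have hTmk' : fcount arcs (S \ F) Tm ≤ k := hTmk
      simp only [fcount] at h1 hTmk' ⊢
      omega
    obtain ⟨a, haSF, ⟨ht₀, hh₀⟩, htm⟩ := h2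
    have htU : (arcs a).1 ∈ U := by
      rcases Finset.mem_union.mp ht₀ with h | h
      · exact absurd h htm
      · exact h
    have hhU : (arcs a).2 ∉ U := fun h => hh₀ (Finset.mem_union_right _ h)
    refine ⟨a, haSF, htU, hhU, ?_⟩
    intro T' hrT' htT' hhT'
    by_contra hlt
    push_neg at hlt
    have hT'k : fcount arcs (S \ F) T' ≤ k := by omega
    have hT'U : T' ∪ U ≠ Finset.univ := by
      intro h
      have : (arcs a).2 ∈ T' ∪ U := h ▸ Finset.mem_univ _
      rcases Finset.mem_union.mp this with h' | h'
      · exact hhT' h'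
      · exact hhU h'
    have hT'C : T' ∈ C := by
      simp only [hC, Finset.mem_filter]
      exact ⟨Finset.mem_univ _, hrT', hT'U, hT'k⟩
    -- submodularity
    have hsm := fcount_submodular arcs (S \ F) Tm T'
    have hUnion_ne : Tm ∪ T' ≠ Finset.univ := by
      intro h
      have : (arcs a).2 ∈ Tm ∪ T' := h ▸ Finset.mem_univ _
      rcases Finset.mem_union.mp this with h' | h'
      · exact hh₀ (Finset.mem_union_left _ h')
      · exact hhT' h'
    have hInter_ne : Tm ∩ T' ≠ Finset.univ := by
      intro h
      have : (arcs a).2 ∈ Tm ∩ T' := h ▸ Finset.mem_univ _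
      exact hhT' (Finset.mem_inter.mp this).2
    have hU1 : k ≤ fcount arcs (S \ F) (Tm ∪ T') :=
      hINV _ (Finset.mem_union_left _ hrTm) hUnion_ne
    have hU2 : k ≤ fcount arcs (S \ F) (Tm ∩ T') :=
      hINV _ (Finset.mem_inter.mpr ⟨hrTm, hrT'⟩) hInter_ne
    have hUk : fcount arcs (S \ F) (Tm ∪ T') ≤ k := by omega
    have hUC : Tm ∪ T' ∈ C := by
      simp only [hC, Finset.mem_filter]
      refine ⟨Finset.mem_univ _, Finset.mem_union_left _ hrTm, ?_, hUk⟩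
      intro h
      have : (arcs a).2 ∈ (Tm ∪ T') ∪ U := h ▸ Finset.mem_univ _
      rcases Finset.mem_union.mp this with h' | h'
      · rcases Finset.mem_union.mp h' with h'' | h''
        · exact hh₀ (Finset.mem_union_left _ h'')
        · exact hhT' h''
      · exact hhU h'
    have hle : Tm ⊆ Tm ∪ T' := Finset.subset_union_left
    have : Tm ∪ T' = Tm := by
      by_contra hne'
      exact hne' (le_antisymm (hTmax hUC hle) hle)
    have hT'sub : T' ⊆ Tm := by
      intro x hx
      rw [← this]; exact Finset.mem_union_right _ hx
    exact htm (hT'sub htT')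
  · -- no critical set: any arc leaving U works
    have hUcnt : k + 1 ≤ fcount arcs (S \ F) U :=
      le_trans (hS U hrU hUne) (hFkeep U (le_refl U))
    have : ((S \ F).filter fun a => (arcs a).1 ∈ U ∧ (arcs a).2 ∉ U).Nonempty := by
      rw [← Finset.card_pos]
      simp only [fcount] at hUcnt
      omega
    obtain ⟨a, ha⟩ := this
    simp only [Finset.mem_filter] at ha
    refine ⟨a, ha.1, ha.2.1, ha.2.2, ?_⟩
    intro T' hrT' htT' hhT'
    by_contra hlt
    push_neg at hlt
    apply hcrit
    refine ⟨T', ?_⟩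
    simp only [hC, Finset.mem_filter]
    refine ⟨Finset.mem_univ _, hrT', ?_, by omega⟩
    intro h
    have : (arcs a).2 ∈ T' ∪ U := h ▸ Finset.mem_univ _
    rcases Finset.mem_union.mp this with h' | h'
    · exact hhT' h'
    · exact ha.2.2 h'

end Pack2



section Pack3
variable {W A : Type*} [Fintype W] [DecidableEq W] [DecidableEq A]
variable (arcs : A → W × W)

set_option linter.unusedSectionVars false

lemma extend_arb (hne : ∀ a, (arcs a).1 ≠ (arcs a).2) (r : W) (k : ℕ) (S : Finset A)
    (hS : ∀ T, r ∈ T → T ≠ Finset.univ → k + 1 ≤ fcount arcs S T) :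
    ∀ (n : ℕ) (U : Finset W) (F : Finset A),
      (Finset.univ \ U).card ≤ n → r ∈ U → F ⊆ S →
      (∀ a ∈ F, (arcs a).1 ∈ U ∧ (arcs a).2 ∈ U) →
      UndirAcyclic arcs F →
      (∀ v ∈ U, Relation.ReflTransGen (fun x y => ∃ a ∈ F, arcs a = (x, y)) r v) →
      (∀ T, r ∈ T → T ≠ Finset.univ → k ≤ fcount arcs (S \ F) T) →
      ∃ F', F' ⊆ S ∧ IsArborescence arcs r F' ∧
        ∀ T, r ∈ T → T ≠ Finset.univ → k ≤ fcount arcs (S \ F') T := by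
  intro n
  induction n with
  | zero =>
    intro U F hcard hrU hFS hFU hacyc hreach hINV
    have hU : U = Finset.univ := by
      have h0 : (Finset.univ \ U) = ∅ := Finset.card_eq_zero.mp (Nat.le_zero.mp hcard)
      apply Finset.eq_univ_iff_forall.mpr
      intro x
      by_contra hxU
      have hx : x ∈ Finset.univ \ U := Finset.mem_sdiff.mpr ⟨Finset.mem_univ x, hxU⟩
      rw [h0] at hx
      simp at hx
    subst hU
    exact ⟨F, hFS, ⟨hacyc, fun v => hreach v (Finset.mem_univ v)⟩, hINV⟩
  | succ n ih =>
    intro U F hcard hrU hFS hFU hacyc hreach hINV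
    by_cases hU : U = Finset.univ
    · subst hU
      exact ⟨F, hFS, ⟨hacyc, fun v => hreach v (Finset.mem_univ v)⟩, hINV⟩
    · obtain ⟨a, haSF, htU, hhU, hgood⟩ :=
        exists_good_arc arcs r k S hS U F hrU hU hFU hINV
      have haS : a ∈ S := (Finset.mem_sdiff.mp haSF).1
      have haF : a ∉ F := (Finset.mem_sdiff.mp haSF).2
      set U' := insert (arcs a).2 U with hU'
      set F' := insert a F with hF'
      have hcard' : (Finset.univ \ U').card ≤ n := by
        have h1 : (arcs a).2 ∈ Finset.univ \ U := Finset.mem_sdiff.mpr ⟨Finset.mem_univ _, hhU⟩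
        have h2 : Finset.univ \ U' = (Finset.univ \ U).erase (arcs a).2 := by
          rw [hU']
          ext x
          simp only [Finset.mem_sdiff, Finset.mem_erase, Finset.mem_univ, true_and,
            Finset.mem_insert, not_or]
          try tauto
        rw [h2]
        have := Finset.card_erase_add_one h1
        omega
      have hFU' : ∀ b ∈ F', (arcs b).1 ∈ U' ∧ (arcs b).2 ∈ U' := by
        intro b hb
        rcases Finset.mem_insert.mp hb with rfl | hb'
        · exact ⟨Finset.mem_insert_of_mem htU, Finset.mem_insert_self _ _⟩
        · exact ⟨Finset.mem_insert_of_mem (hFU b hb').1,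
            Finset.mem_insert_of_mem (hFU b hb').2⟩
      have hacyc' : UndirAcyclic arcs F' := by
        apply undirAcyclic_insert arcs F a hacyc (hne a)
        intro b hb
        exact ⟨fun h => hhU (h ▸ (hFU b hb).1), fun h => hhU (h ▸ (hFU b hb).2)⟩
      have hreach' : ∀ v ∈ U',
          Relation.ReflTransGen (fun x y => ∃ b ∈ F', arcs b = (x, y)) r v := by
        intro v hv
        rcases Finset.mem_insert.mp hv with rfl | hv'
        · refine Relation.ReflTransGen.tail ?_ ⟨a, Finset.mem_insert_self _ _, rfl⟩
          exact Relation.ReflTransGen.mono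
            (fun x y ⟨b, hb, h⟩ => ⟨b, Finset.mem_insert_of_mem hb, h⟩) _ _ (hreach _ htU)
        · exact Relation.ReflTransGen.mono
            (fun x y ⟨b, hb, h⟩ => ⟨b, Finset.mem_insert_of_mem hb, h⟩) _ _ (hreach v hv')
      have hINV' : ∀ T, r ∈ T → T ≠ Finset.univ → k ≤ fcount arcs (S \ F') T := by
        intro T hrT hTuniv
        have hsub : ((S \ F).filter fun b => (arcs b).1 ∈ T ∧ (arcs b).2 ∉ T) ⊆
            insert a ((S \ F').filter fun b => (arcs b).1 ∈ T ∧ (arcs b).2 ∉ T) := by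
          intro x hx
          simp only [Finset.mem_filter, Finset.mem_sdiff, hF', Finset.mem_insert] at hx ⊢
          by_cases hxa : x = a
          · exact Or.inl hxa
          · exact Or.inr ⟨⟨hx.1.1, fun h => hxa (by tauto)⟩, hx.2⟩
        have hsub2 := Finset.card_le_card hsub
        have hc := Finset.card_insert_le a
          ((S \ F').filter fun b => (arcs b).1 ∈ T ∧ (arcs b).2 ∉ T)
        by_cases hleave : (arcs a).1 ∈ T ∧ (arcs a).2 ∉ T
        · have := hgood T hrT hleave.1 hleave.2
          simp only [fcount] at this ⊢
          omega
        · have : a ∉ ((S \ F).filter fun b => (arcs b).1 ∈ T ∧ (arcs b).2 ∉ T) := by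
            simp only [Finset.mem_filter]
            tauto
          have hsub' : ((S \ F).filter fun b => (arcs b).1 ∈ T ∧ (arcs b).2 ∉ T) ⊆
              ((S \ F').filter fun b => (arcs b).1 ∈ T ∧ (arcs b).2 ∉ T) := by
            intro x hx
            rcases Finset.mem_insert.mp (hsub hx) with rfl | h
            · exact absurd hx this
            · exact h
          have := Finset.card_le_card hsub'
          have hi := hINV T hrT hTuniv
          simp only [fcount] at hi ⊢
          omega
      exact ih U' F' hcard' (Finset.mem_insert_of_mem hrU)
        (Finset.insert_subset haS hFS) hFU' hacyc' hreach' hINV'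

lemma exists_k_arb (hne : ∀ a, (arcs a).1 ≠ (arcs a).2) (r : W) :
    ∀ (k : ℕ) (S : Finset A),
      (∀ T, r ∈ T → T ≠ Finset.univ → k ≤ fcount arcs S T) →
      ∃ T ⊆ S, IsKArborescence arcs r k T := by
  intro k
  induction k with
  | zero =>
    intro S _
    refine ⟨∅, Finset.empty_subset _, fun i => i.elim0, fun i => i.elim0, ?_⟩
    simp
  | succ k ih =>
    intro S hS
    obtain ⟨F, hFS, hFarb, hres⟩ := extend_arb arcs hne r k S hS
      (Finset.univ \ {r}).card {r} ∅ (le_refl _) (Finset.mem_singleton_self r)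
      (Finset.empty_subset _) (fun a ha => absurd ha (Finset.notMem_empty a))
      (fun T' hT' hT'ne => absurd (Finset.subset_empty.mp hT')
        (Finset.nonempty_iff_ne_empty.mp hT'ne))
      (fun v hv => by rw [Finset.mem_singleton.mp hv])
      (fun T hrT hTu => by
        rw [Finset.sdiff_empty]
        exact le_trans (Nat.le_succ k) (hS T hrT hTu))
    obtain ⟨T₀, hT₀S, P₀, hP₀arb, hP₀dis, hP₀un⟩ := ih (S \ F) hres
    have hd : ∀ j₀ : Fin k, Disjoint F (P₀ j₀) := by
      intro j₀
      rw [Finset.disjoint_left]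
      intro x hxF hxP
      have : x ∈ S \ F := hT₀S (hP₀un ▸ Finset.mem_biUnion.mpr ⟨j₀, Finset.mem_univ _, hxP⟩)
      exact (Finset.mem_sdiff.mp this).2 hxF
    refine ⟨F ∪ T₀, ?_, ?_⟩
    · exact Finset.union_subset hFS (le_trans hT₀S Finset.sdiff_subset)
    · refine ⟨Fin.cons F P₀, ?_, ?_, ?_⟩
      · intro i
        rcases Fin.eq_zero_or_eq_succ i with rfl | ⟨i₀, rfl⟩
        · simpa using hFarb
        · simpa using hP₀arb i₀
      · intro i j hij
        rcases Fin.eq_zero_or_eq_succ i with rfl | ⟨i₀, rfl⟩ <;>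
          rcases Fin.eq_zero_or_eq_succ j with rfl | ⟨j₀, rfl⟩
        · exact absurd rfl hij
        · simpa using hd j₀
        · simpa using (hd i₀).symm
        · have hij' : i₀ ≠ j₀ := fun h => hij (congrArg Fin.succ h)
          simpa using hP₀dis i₀ j₀ hij'
      · ext x
        simp only [Finset.mem_biUnion, Finset.mem_univ, true_and, Finset.mem_union]
        constructor
        · rintro ⟨i, hi⟩
          rcases Fin.eq_zero_or_eq_succ i with rfl | ⟨i₀, rfl⟩
          · rw [Fin.cons_zero] at hi
            exact Or.inl hi
          · rw [Fin.cons_succ] at hi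
            exact Or.inr (hP₀un ▸ Finset.mem_biUnion.mpr ⟨i₀, Finset.mem_univ _, hi⟩)
        · rintro (h | h)
          · exact ⟨0, by simpa using h⟩
          · rw [← hP₀un] at h
            obtain ⟨j, -, hj⟩ := Finset.mem_biUnion.mp h
            exact ⟨j.succ, by simpa using hj⟩

end Pack3




section CapApp
variable {V E : Type*} [Fintype V] [DecidableEq V] [Fintype E] [DecidableEq E]
variable (ends : E → V × V) (u : E → ℕ) (k : ℕ)

/-- counting lower bound: a feasible edge set yields an arc set with all `r`-cuts ≥ k -/
lemma cap_lower (hu : ∀ e, u e ≤ k)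
    (F₀ : Finset E) (hF₀ : CapFeasible ends u k F₀) (r : V)
    (T : Finset V) (hrT : r ∈ T) (hT : T ≠ Finset.univ) :
    k ≤ fcount (capArcEnds ends k)
      (Finset.univ.filter fun a : E × Fin k × Bool => a.1 ∈ F₀ ∧ (a.2.1 : ℕ) < u a.1) T := by
  classical
  set R : Finset V := Finset.univ \ T with hR
  have hmemR : ∀ x : V, x ∈ R ↔ x ∉ T := by
    intro x; simp [hR, Finset.mem_sdiff]
  have hRne : R.Nonempty := by
    rw [Finset.sdiff_nonempty]
    intro h
    exact hT (Finset.univ_subset_iff.mp h)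
  have hRuniv : R ≠ Finset.univ := by
    intro h
    have : r ∈ R := h ▸ Finset.mem_univ r
    exact (hmemR r).mp this hrT
  have hcut := hF₀ R hRne hRuniv
  set X := (Finset.univ.filter fun a : E × Fin k × Bool => a.1 ∈ F₀ ∧ (a.2.1 : ℕ) < u a.1).filter
    (fun a => (capArcEnds ends k a).1 ∈ T ∧ (capArcEnds ends k a).2 ∉ T) with hX
  have hmaps : ∀ x ∈ X, x.1 ∈ cutEdges ends F₀ R := by
    rintro ⟨e, i, b⟩ hx
    simp only [hX, Finset.mem_filter, Finset.mem_univ, true_and] at hx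
    obtain ⟨⟨heF, -⟩, hcross⟩ := hx
    simp only [cutEdges, Finset.mem_filter]
    refine ⟨heF, ?_⟩
    cases b <;> simp only [capArcEnds] at hcross <;>
      simp only [hmemR] at * <;> simp_all <;> tauto
  have hXcard : X.card = ∑ e ∈ cutEdges ends F₀ R, (X.filter fun a => a.1 = e).card :=
    Finset.card_eq_sum_card_fiberwise hmaps
  have hfib : ∀ e ∈ cutEdges ends F₀ R, u e ≤ (X.filter fun a => a.1 = e).card := by
    intro e he
    simp only [cutEdges, Finset.mem_filter] at he
    obtain ⟨heF, hcross⟩ := he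
    have hb : ∃ b₀ : Bool, ∀ i : Fin k,
        (capArcEnds ends k (e, i, b₀)).1 ∈ T ∧ (capArcEnds ends k (e, i, b₀)).2 ∉ T := by
      simp only [hmemR] at hcross
      by_cases h1 : (ends e).1 ∈ T
      · have h2 : (ends e).2 ∉ T := by tauto
        exact ⟨true, fun i => by simp only [capArcEnds]; exact ⟨h1, h2⟩⟩
      · have h2 : (ends e).2 ∈ T := by tauto
        exact ⟨false, fun i => by simp only [capArcEnds]; exact ⟨h2, h1⟩⟩
    obtain ⟨b₀, hb0⟩ := hb
    have hinj : Function.Injective (fun j : Fin (u e) => ((e, Fin.castLE (hu e) j, b₀) : E × Fin k × Bool)) := by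
      intro x y hxy
      simp only [Prod.mk.injEq] at hxy
      exact Fin.castLE_injective (hu e) hxy.2.1
    have hsub : (Finset.univ : Finset (Fin (u e))).image
        (fun j => ((e, Fin.castLE (hu e) j, b₀) : E × Fin k × Bool)) ⊆
        X.filter fun a => a.1 = e := by
      intro x hx
      obtain ⟨j, -, rfl⟩ := Finset.mem_image.mp hx
      refine Finset.mem_filter.mpr ⟨Finset.mem_filter.mpr ⟨?_, ?_⟩, rfl⟩
      · exact Finset.mem_filter.mpr ⟨Finset.mem_univ _, heF, by simpa using j.2⟩
      · exact hb0 (Fin.castLE (hu e) j)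
    calc u e = ((Finset.univ : Finset (Fin (u e))).image
        (fun j => ((e, Fin.castLE (hu e) j, b₀) : E × Fin k × Bool))).card := by
          rw [Finset.card_image_of_injective _ hinj, Finset.card_fin]
      _ ≤ _ := Finset.card_le_card hsub
  calc k ≤ ∑ e ∈ cutEdges ends F₀ R, u e := hcut
    _ ≤ ∑ e ∈ cutEdges ends F₀ R, (X.filter fun a => a.1 = e).card := Finset.sum_le_sum hfib
    _ = X.card := hXcard.symm
    _ = fcount (capArcEnds ends k) _ T := rfl

/-- any `k`-arborescence with valid copy indices induces a feasible edge set. -/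
lemma cap_feas (u : E → ℕ) (r : V) (T' : Finset (E × Fin k × Bool))
    (hside : ∀ a ∈ T', (a.2.1 : ℕ) < u a.1)
    (harb : IsKArborescence (capArcEnds ends k) r k T') (hu : ∀ e, u e ≤ k) :
    CapFeasible ends u k (T'.image Prod.fst) := by
  classical
  intro R hRne hRuniv
  set T : Finset V := if r ∈ R then R else Finset.univ \ R with hT
  have hrT : r ∈ T := by
    rw [hT]; split_ifs with h
    · exact h
    · exact Finset.mem_sdiff.mpr ⟨Finset.mem_univ r, h⟩
  have hTuniv : T ≠ Finset.univ := by
    rw [hT]; split_ifs with h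
    · exact hRuniv
    · obtain ⟨v, hv⟩ := hRne
      intro hh
      have hv2 : v ∈ Finset.univ \ R := by rw [hh]; exact Finset.mem_univ v
      exact (Finset.mem_sdiff.mp hv2).2 hv
  have hcrossRT : ∀ p q : V, p ∈ T → q ∉ T → ¬(p ∈ R ↔ q ∈ R) := by
    intro p q hp hq
    rw [hT] at hp hq
    split_ifs at hp hq with h
    · tauto
    · simp only [Finset.mem_sdiff, Finset.mem_univ, true_and] at hp hq
      push_neg at hq
      tauto
  obtain ⟨P, hP, hPd, hPu⟩ := harb
  set X := T'.filter (fun a => (capArcEnds ends k a).1 ∈ T ∧ (capArcEnds ends k a).2 ∉ T)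
    with hX
  obtain ⟨w, hwT⟩ : ∃ w, w ∉ T := by
    by_contra hcon
    push_neg at hcon
    exact hTuniv (Finset.eq_univ_iff_forall.mpr hcon)
  have hlow : k ≤ X.card := by
    have hsub : Finset.univ.biUnion (fun i : Fin k => (P i).filter
        (fun a => (capArcEnds ends k a).1 ∈ T ∧ (capArcEnds ends k a).2 ∉ T)) ⊆ X := by
      intro x hx
      obtain ⟨i, -, hx⟩ := Finset.mem_biUnion.mp hx
      have hxP := Finset.mem_filter.mp hx
      refine Finset.mem_filter.mpr ⟨?_, hxP.2⟩
      rw [← hPu]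
      exact Finset.mem_biUnion.mpr ⟨i, Finset.mem_univ _, hxP.1⟩
    have hcardb := Finset.card_biUnion (s := (Finset.univ : Finset (Fin k)))
      (t := fun i => (P i).filter
        (fun a => (capArcEnds ends k a).1 ∈ T ∧ (capArcEnds ends k a).2 ∉ T))
      (fun i _ j _ hij => Finset.disjoint_filter_filter (hPd i j hij))
    have hone : ∀ i : Fin k, 1 ≤ ((P i).filter
        (fun a => (capArcEnds ends k a).1 ∈ T ∧ (capArcEnds ends k a).2 ∉ T)).card := by
      intro i
      obtain ⟨a, haP, hcross⟩ := cross_of_reach (capArcEnds ends k) (P i) ((hP i).2 w) hrT hwT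
      exact Finset.card_pos.mpr ⟨a, Finset.mem_filter.mpr ⟨haP, hcross⟩⟩
    calc k = ∑ _i : Fin k, 1 := by simp
      _ ≤ ∑ i : Fin k, ((P i).filter
          (fun a => (capArcEnds ends k a).1 ∈ T ∧ (capArcEnds ends k a).2 ∉ T)).card :=
        Finset.sum_le_sum (fun i _ => hone i)
      _ = _ := hcardb.symm
      _ ≤ X.card := Finset.card_le_card hsub
  have hmaps : ∀ x ∈ X, x.1 ∈ cutEdges ends (T'.image Prod.fst) R := by
    rintro ⟨e, i, b⟩ hx
    have hx' := Finset.mem_filter.mp hx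
    refine Finset.mem_filter.mpr ⟨Finset.mem_image_of_mem _ hx'.1, ?_⟩
    obtain ⟨h1, h2⟩ := hx'.2
    cases b <;> simp only [capArcEnds] at h1 h2
    · have := hcrossRT _ _ h1 h2
      tauto
    · exact hcrossRT _ _ h1 h2
  have hXcard : X.card = ∑ e ∈ cutEdges ends (T'.image Prod.fst) R,
      (X.filter fun a => a.1 = e).card := Finset.card_eq_sum_card_fiberwise hmaps
  have hfib : ∀ e ∈ cutEdges ends (T'.image Prod.fst) R,
      (X.filter fun a => a.1 = e).card ≤ u e := by
    intro e _
    have hinj : Set.InjOn (fun a : E × Fin k × Bool => a.2.1)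
        ((X.filter fun a => a.1 = e) : Finset (E × Fin k × Bool)) := by
      rintro ⟨e1, i1, b1⟩ h1 ⟨e2, i2, b2⟩ h2 heq
      simp only [Finset.coe_filter, Set.mem_setOf_eq, Finset.mem_filter, hX] at h1 h2
      obtain ⟨⟨-, hc1⟩, he1⟩ := h1
      obtain ⟨⟨-, hc2⟩, he2⟩ := h2
      simp only at heq he1 he2
      subst he1; subst he2; subst heq
      suffices hb : b1 = b2 by rw [hb]
      cases b1 <;> cases b2 <;> simp only [capArcEnds] at hc1 hc2 <;> tauto
    have hto : ∀ a ∈ X.filter (fun a => a.1 = e), a.2.1 ∈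
        (Finset.univ.filter fun i : Fin k => (i : ℕ) < u e) := by
      intro a ha
      have ha' := Finset.mem_filter.mp ha
      have haT' : a ∈ T' := (Finset.mem_filter.mp ha'.1).1
      refine Finset.mem_filter.mpr ⟨Finset.mem_univ _, ?_⟩
      have hlt := hside a haT'
      rw [ha'.2] at hlt
      exact hlt
    calc (X.filter fun a => a.1 = e).card ≤
        (Finset.univ.filter fun i : Fin k => (i : ℕ) < u e).card :=
          Finset.card_le_card_of_injOn _ hto hinj
      _ = u e := card_filter_fin_lt (hu e)
  calc k ≤ X.card := hlow
    _ = ∑ e ∈ cutEdges ends (T'.image Prod.fst) R, (X.filter fun a => a.1 = e).card := hXcard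
    _ ≤ ∑ e ∈ cutEdges ends (T'.image Prod.fst) R, u e := Finset.sum_le_sum hfib

/-- cost of a `k`-arborescence in terms of edge costs. -/
lemma cap_cost (u : E → ℕ) (c : E → ℝ) (hc : ∀ e, 0 ≤ c e) (r : V) (umax : ℕ)
    (humax : ∀ e, u e ≤ umax)
    (T'' : Finset (E × Fin k × Bool)) (hside : ∀ a ∈ T'', (a.2.1 : ℕ) < u a.1)
    (harb : IsKArborescence (capArcEnds ends k) r k T'') (hu : ∀ e, u e ≤ k) :
    ∑ a ∈ T'', c a.1 ≤ (min k (2 * umax) : ℕ) * ∑ e ∈ T''.image Prod.fst, c e := by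
  classical
  obtain ⟨P, hP, hPd, hPu⟩ := harb
  have hfibcard : ∀ e ∈ T''.image Prod.fst,
      (T''.filter fun a => a.1 = e).card ≤ min k (2 * umax) := by
    intro e _
    refine le_min ?_ ?_
    · -- at most one arc per edge in each arborescence
      have hone : ∀ i : Fin k, ((P i).filter fun a => a.1 = e).card ≤ 1 := by
        intro i
        rw [Finset.card_le_one]
        rintro x hx y hy
        by_contra hxy
        have hxP := Finset.mem_filter.mp hx
        have hyP := Finset.mem_filter.mp hy
        have hends : ∀ z : E × Fin k × Bool, z.1 = e →
            (capArcEnds ends k z).1 ∈ ({(ends e).1, (ends e).2} : Finset V) ∧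
            (capArcEnds ends k z).2 ∈ ({(ends e).1, (ends e).2} : Finset V) := by
          rintro ⟨e', i', b'⟩ hz
          simp only at hz
          subst hz
          cases b' <;> simp [capArcEnds]
        have hsub2 : (({x, y} : Finset (E × Fin k × Bool)).image
              (fun a => (capArcEnds ends k a).1)) ∪
            (({x, y} : Finset (E × Fin k × Bool)).image
              (fun a => (capArcEnds ends k a).2)) ⊆
            ({(ends e).1, (ends e).2} : Finset V) := by
          intro w hw
          rcases Finset.mem_union.mp hw with hw | hw <;>
            obtain ⟨z, hz, rfl⟩ := Finset.mem_image.mp hw <;>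
            rcases Finset.mem_insert.mp hz with rfl | hz'
          · exact (hends z hxP.2).1
          · rw [Finset.mem_singleton.mp hz']
            exact (hends y hyP.2).1
          · exact (hends z hxP.2).2
          · rw [Finset.mem_singleton.mp hz']
            exact (hends y hyP.2).2
        have hacy := (hP i).1 {x, y} ?_ ⟨x, Finset.mem_insert_self _ _⟩
        · have hcard2 : ({x, y} : Finset (E × Fin k × Bool)).card = 2 :=
            Finset.card_pair hxy
          have hle2 := Finset.card_le_card hsub2
          have : ({(ends e).1, (ends e).2} : Finset V).card ≤ 2 :=
            Finset.card_insert_le _ _ |>.trans (by simp)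
          omega
        · intro z hz
          rcases Finset.mem_insert.mp hz with rfl | hz'
          · exact hxP.1
          · rw [Finset.mem_singleton.mp hz']
            exact hyP.1
      have hfe : (T''.filter fun a => a.1 = e) =
          Finset.univ.biUnion (fun i : Fin k => (P i).filter fun a => a.1 = e) := by
        rw [← hPu, Finset.filter_biUnion]
      calc (T''.filter fun a => a.1 = e).card
          ≤ ∑ i : Fin k, ((P i).filter fun a => a.1 = e).card := by
            rw [hfe]; exact Finset.card_biUnion_le
        _ ≤ ∑ _i : Fin k, 1 := Finset.sum_le_sum fun i _ => hone i
        _ = k := by simp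
    · -- at most 2 * u e arcs per edge overall
      have hinj : Set.InjOn (fun a : E × Fin k × Bool => (a.2.1, a.2.2))
          ((T''.filter fun a => a.1 = e) : Finset (E × Fin k × Bool)) := by
        rintro ⟨e1, i1, b1⟩ h1 ⟨e2, i2, b2⟩ h2 heq
        simp only [Finset.coe_filter, Set.mem_setOf_eq] at h1 h2
        simp only [Prod.mk.injEq] at heq ⊢
        exact ⟨h1.2.trans h2.2.symm, heq.1, heq.2⟩
      have hto : ∀ a ∈ T''.filter (fun a => a.1 = e), (a.2.1, a.2.2) ∈
          ((Finset.univ.filter fun i : Fin k => (i : ℕ) < u e) ×ˢ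
            (Finset.univ : Finset Bool)) := by
        intro a ha
        have ha' := Finset.mem_filter.mp ha
        have hlt := hside a ha'.1
        rw [ha'.2] at hlt
        exact Finset.mem_product.mpr ⟨Finset.mem_filter.mpr ⟨Finset.mem_univ _, hlt⟩,
          Finset.mem_univ _⟩
      calc (T''.filter fun a => a.1 = e).card
          ≤ ((Finset.univ.filter fun i : Fin k => (i : ℕ) < u e) ×ˢ
              (Finset.univ : Finset Bool)).card :=
            Finset.card_le_card_of_injOn _ hto hinj
        _ = u e * 2 := by
            rw [Finset.card_product, card_filter_fin_lt (hu e)]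
            simp
        _ ≤ 2 * umax := by have := humax e; omega
  have hsplit : ∑ a ∈ T'', c a.1 = ∑ e ∈ T''.image Prod.fst,
      ((T''.filter fun a => a.1 = e).card : ℝ) * c e := by
    rw [← Finset.sum_fiberwise_of_maps_to (g := Prod.fst) (t := T''.image Prod.fst)
      (fun a ha => Finset.mem_image_of_mem _ ha) (fun a => c a.1)]
    apply Finset.sum_congr rfl
    intro e _
    rw [Finset.sum_congr rfl (fun a ha => by rw [(Finset.mem_filter.mp ha).2]),
      Finset.sum_const, nsmul_eq_mul]
  rw [hsplit, Finset.mul_sum]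
  apply Finset.sum_le_sum
  intro e he
  have h1 := hfibcard e he
  have h2 : ((T''.filter fun a => a.1 = e).card : ℝ) ≤ ((min k (2 * umax) : ℕ) : ℝ) :=
    Nat.cast_le.mpr h1
  exact mul_le_mul_of_nonneg_right h2 (hc e)

/-- sum over image is at most sum over the set (nonneg weights). -/
lemma sum_image_fst_le (c : E → ℝ) (hc : ∀ e, 0 ≤ c e) (T' : Finset (E × Fin k × Bool)) :
    ∑ e ∈ T'.image Prod.fst, c e ≤ ∑ a ∈ T', c a.1 := by
  classical
  rw [← Finset.sum_fiberwise_of_maps_to (g := Prod.fst) (t := T'.image Prod.fst)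
    (fun a ha => Finset.mem_image_of_mem _ ha) (fun a => c a.1)]
  apply Finset.sum_le_sum
  intro e he
  obtain ⟨a, ha, hae⟩ := Finset.mem_image.mp he
  have hmem : a ∈ T'.filter fun a => a.1 = e := Finset.mem_filter.mpr ⟨ha, hae⟩
  calc c e = ∑ x ∈ ({a} : Finset (E × Fin k × Bool)), c x.1 := by
        rw [Finset.sum_singleton, hae]
    _ ≤ ∑ x ∈ T'.filter (fun x => x.1 = e), c x.1 := by
        apply Finset.sum_le_sum_of_subset_of_nonneg
        · simpa using hmem
        · intro x _ _; exact hc x.1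

end CapApp

theorem stmt8 {V E : Type*} [Fintype V] [DecidableEq V] [Fintype E] [DecidableEq E]
    (ends : E → V × V) (hloop : ∀ e : E, (ends e).1 ≠ (ends e).2)
    (u : E → ℕ) (c : E → ℝ) (hc : ∀ e, 0 ≤ c e)
    (k : ℕ) (hk : 1 ≤ k) (hu : ∀ e, 1 ≤ u e ∧ u e ≤ k)
    (umax : ℕ) (humax₁ : ∀ e, u e ≤ umax) (humax₂ : ∃ e, u e = umax)
    (r : V) (OPT : ℝ)
    (hOPT : IsLeast {x : ℝ | ∃ F : Finset E,
      CapFeasible ends u k F ∧ x = ∑ e ∈ F, c e} OPT) :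
    (∃ T : Finset (E × Fin k × Bool),
        (∀ a ∈ T, (a.2.1 : ℕ) < u a.1) ∧
        IsKArborescence (capArcEnds ends k) r k T) ∧
    ∀ T' : Finset (E × Fin k × Bool),
      (∀ a ∈ T', (a.2.1 : ℕ) < u a.1) →
      IsKArborescence (capArcEnds ends k) r k T' →
      (∀ T'' : Finset (E × Fin k × Bool),
        (∀ a ∈ T'', (a.2.1 : ℕ) < u a.1) →
        IsKArborescence (capArcEnds ends k) r k T'' →
        ∑ a ∈ T', c a.1 ≤ ∑ a ∈ T'', c a.1) →
      CapFeasible ends u k (T'.image Prod.fst) ∧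
        ∑ e ∈ T'.image Prod.fst, c e ≤ (min k (2 * umax) : ℕ) * OPT := by
  classical
  obtain ⟨F₀, hF₀feas, hOPTeq⟩ := hOPT.1
  have hane : ∀ a : E × Fin k × Bool,
      (capArcEnds ends k a).1 ≠ (capArcEnds ends k a).2 := by
    rintro ⟨e, i, b⟩
    cases b <;> simp only [capArcEnds] <;> simp
    · exact (hloop e).symm
    · exact hloop e
  set S₀ : Finset (E × Fin k × Bool) :=
    Finset.univ.filter (fun a => a.1 ∈ F₀ ∧ (a.2.1 : ℕ) < u a.1) with hS₀def
  have hS₀count : ∀ T, r ∈ T → T ≠ Finset.univ →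
      k ≤ fcount (capArcEnds ends k) S₀ T :=
    fun T hrT hT => cap_lower ends u k (fun e => (hu e).2) F₀ hF₀feas r T hrT hT
  obtain ⟨T₀, hT₀S, hT₀arb⟩ := exists_k_arb (capArcEnds ends k) hane r k S₀ hS₀count
  have hT₀side : ∀ a ∈ T₀, (a.2.1 : ℕ) < u a.1 :=
    fun a ha => (Finset.mem_filter.mp (hT₀S ha)).2.2
  have hT₀img : T₀.image Prod.fst ⊆ F₀ := by
    intro e he
    obtain ⟨a, ha, rfl⟩ := Finset.mem_image.mp he
    exact (Finset.mem_filter.mp (hT₀S ha)).2.1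
  refine ⟨⟨T₀, hT₀side, hT₀arb⟩, ?_⟩
  intro T' hside harb hmin
  refine ⟨cap_feas ends k u r T' hside harb (fun e => (hu e).2), ?_⟩
  have h1 : ∑ e ∈ T'.image Prod.fst, c e ≤ ∑ a ∈ T', c a.1 :=
    sum_image_fst_le (E := E) k c hc T'
  have h2 : ∑ a ∈ T', c a.1 ≤ ∑ a ∈ T₀, c a.1 := hmin T₀ hT₀side hT₀arb
  have h3 : ∑ a ∈ T₀, c a.1 ≤ (min k (2 * umax) : ℕ) * ∑ e ∈ T₀.image Prod.fst, c e :=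
    cap_cost ends k u c hc r umax humax₁ T₀ hT₀side hT₀arb (fun e => (hu e).2)
  have h4 : ∑ e ∈ T₀.image Prod.fst, c e ≤ ∑ e ∈ F₀, c e :=
    Finset.sum_le_sum_of_subset_of_nonneg hT₀img (fun e _ _ => hc e)
  have h5 : (0 : ℝ) ≤ ((min k (2 * umax) : ℕ) : ℝ) := Nat.cast_nonneg _
  calc ∑ e ∈ T'.image Prod.fst, c e ≤ ∑ a ∈ T₀, c a.1 := le_trans h1 h2
    _ ≤ (min k (2 * umax) : ℕ) * ∑ e ∈ T₀.image Prod.fst, c e := h3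
    _ ≤ (min k (2 * umax) : ℕ) * ∑ e ∈ F₀, c e := mul_le_mul_of_nonneg_left h4 h5
    _ = (min k (2 * umax) : ℕ) * OPT := by rw [hOPTeq]
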